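/- (Abstract form of Lemma 1.) Let E be a real inner product space, σ > 0, R ≥ 0, and f_u, f_v, a₁, a₂, b₁, b₂ ∈ E. Assume ‖f_u − a₁‖ ≤ R, ‖f_u − a₂‖ ≤ R, ‖f_v − b₁‖ ≤ R, ‖f_v − b₂‖ ≤ R, and that the class-2 mean shift is the negative of the class-1 mean shift: a₂ − b₂ = −(a₁ − b₁). Then |P_σ(f_u; a₁, a₂) − P_σ(f_v; b₁, b₂)| ≤ (2R/σ²) · (‖f_u − f_v‖ + ‖a₁ − b₁‖). -/

import Mathlib

open scoped BigOperators

/-- Gaussian two-class posterior: the probability that feature `f` was drawn from the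
Gaussian with mean `a` rather than mean `b` (common isotropic variance `σ²`, equal priors). -/
noncomputable def gaussPosterior {E : Type*} [NormedAddCommGroup E]
    [InnerProductSpace ℝ E] (σ : ℝ) (f a b : E) : ℝ :=
  Real.exp (-‖f - a‖ ^ 2 / (2 * σ ^ 2)) /
    (Real.exp (-‖f - a‖ ^ 2 / (2 * σ ^ 2)) + Real.exp (-‖f - b‖ ^ 2 / (2 * σ ^ 2)))

lemma sigmoid_lip (s t : ℝ) :
    |1 / (1 + Real.exp (-t)) - 1 / (1 + Real.exp (-s))| ≤ |t - s| := by
  wlog h : s ≤ t with H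
  · push_neg at h
    rw [abs_sub_comm, abs_sub_comm t s]
    exact H t s h.le
  have hu : 0 < Real.exp (-s) := Real.exp_pos _
  have hv : 0 < Real.exp (-t) := Real.exp_pos _
  have hvu : Real.exp (-t) ≤ Real.exp (-s) := Real.exp_le_exp.2 (by linarith)
  set u := Real.exp (-s) with hus
  set v := Real.exp (-t) with hvs
  have h1 : 1 / (1 + v) - 1 / (1 + u) = (u - v) / ((1 + u) * (1 + v)) := by
    rw [div_sub_div _ _ (by positivity : (1:ℝ) + v ≠ 0) (by positivity : (1:ℝ) + u ≠ 0)]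
    rw [show (1 + v) * (1 + u) = (1 + u) * (1 + v) by ring]
    congr 1
    ring
  have hnn : 0 ≤ 1 / (1 + v) - 1 / (1 + u) := by
    rw [h1]
    apply div_nonneg (by linarith)
    positivity
  rw [abs_of_nonneg hnn, abs_of_nonneg (by linarith : (0:ℝ) ≤ t - s), h1]
  have h2 : (u - v) / ((1 + u) * (1 + v)) ≤ (u - v) / u := by
    gcongr
    · nlinarith
  have h3 : (u - v) / u ≤ Real.log (u / v) := by
    have := Real.one_sub_inv_le_log_of_pos (x := u / v) (by positivity)
    have hinv : (u / v)⁻¹ = v / u := by field_simp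
    rw [hinv] at this
    have : 1 - v / u ≤ Real.log (u / v) := this
    have heq : (u - v) / u = 1 - v / u := by field_simp
    linarith [heq ▸ this]
  have h4 : Real.log (u / v) = t - s := by
    rw [Real.log_div (ne_of_gt hu) (ne_of_gt hv), hus, hvs,
      Real.log_exp, Real.log_exp]
    ring
  linarith

lemma gaussPosterior_eq_sigmoid {E : Type*} [NormedAddCommGroup E]
    [InnerProductSpace ℝ E] (σ : ℝ) (f a b : E) :
    gaussPosterior σ f a b
      = 1 / (1 + Real.exp (-((‖f - b‖ ^ 2 - ‖f - a‖ ^ 2) / (2 * σ ^ 2)))) := by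
  unfold gaussPosterior
  have hx : (0:ℝ) < Real.exp (-‖f - a‖ ^ 2 / (2 * σ ^ 2)) := Real.exp_pos _
  have hy : (0:ℝ) < Real.exp (-‖f - b‖ ^ 2 / (2 * σ ^ 2)) := Real.exp_pos _
  rw [div_eq_div_iff (by positivity) (by positivity)]
  rw [mul_add, mul_one, ← Real.exp_add]
  congr 2
  ring

theorem gauss_posterior_diff_abstract_lemma1
    {E : Type*} [NormedAddCommGroup E] [InnerProductSpace ℝ E]
    (σ R : ℝ) (hσ : 0 < σ) (hR : 0 ≤ R) (fu fv a₁ a₂ b₁ b₂ : E)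
    (hua₁ : ‖fu - a₁‖ ≤ R) (hua₂ : ‖fu - a₂‖ ≤ R)
    (hvb₁ : ‖fv - b₁‖ ≤ R) (hvb₂ : ‖fv - b₂‖ ≤ R)
    (hshift : a₂ - b₂ = -(a₁ - b₁)) :
    |gaussPosterior σ fu a₁ a₂ - gaussPosterior σ fv b₁ b₂|
      ≤ (2 * R / σ ^ 2) * (‖fu - fv‖ + ‖a₁ - b₁‖) := by
  have hσ2 : (0:ℝ) < σ ^ 2 := by positivity
  set tu : ℝ := (‖fu - a₂‖ ^ 2 - ‖fu - a₁‖ ^ 2) / (2 * σ ^ 2) with htu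
  set tv : ℝ := (‖fv - b₂‖ ^ 2 - ‖fv - b₁‖ ^ 2) / (2 * σ ^ 2) with htv
  have h1 : |gaussPosterior σ fu a₁ a₂ - gaussPosterior σ fv b₁ b₂| ≤ |tu - tv| := by
    rw [gaussPosterior_eq_sigmoid, gaussPosterior_eq_sigmoid]
    exact sigmoid_lip tv tu
  have hb2 : b₂ = a₁ + a₂ - b₁ := by
    have := hshift
    rw [sub_eq_iff_eq_add] at this
    rw [this]
    abel
  -- key algebraic identity
  have hid : (‖fu - a₂‖ ^ 2 - ‖fu - a₁‖ ^ 2) - (‖fv - b₂‖ ^ 2 - ‖fv - b₁‖ ^ 2)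
      = 2 * inner ℝ (fu - fv) (a₁ - a₂)
        + 2 * inner ℝ ((fv - b₁) + (fv - b₂)) (a₁ - b₁) := by
    rw [hb2]
    simp only [← real_inner_self_eq_norm_sq]
    simp only [inner_sub_left, inner_sub_right, inner_add_left, inner_add_right]
    simp only [real_inner_comm fv a₁, real_inner_comm fv a₂, real_inner_comm fv b₁,
      real_inner_comm fu a₁, real_inner_comm fu a₂, real_inner_comm a₂ a₁,
      real_inner_comm b₁ a₁, real_inner_comm b₁ a₂, real_inner_comm fv fu]
    ring
  have hda : ‖a₁ - a₂‖ ≤ 2 * R := by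
    have : a₁ - a₂ = (fu - a₂) - (fu - a₁) := by abel
    rw [this]
    calc ‖(fu - a₂) - (fu - a₁)‖ ≤ ‖fu - a₂‖ + ‖fu - a₁‖ := norm_sub_le _ _
      _ ≤ 2 * R := by linarith
  have hw : ‖(fv - b₁) + (fv - b₂)‖ ≤ 2 * R := by
    calc ‖(fv - b₁) + (fv - b₂)‖ ≤ ‖fv - b₁‖ + ‖fv - b₂‖ := norm_add_le _ _
      _ ≤ 2 * R := by linarith
  have hip1 : |(inner ℝ (fu - fv) (a₁ - a₂) : ℝ)| ≤ ‖fu - fv‖ * (2 * R) := by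
    calc |(inner ℝ (fu - fv) (a₁ - a₂) : ℝ)| ≤ ‖fu - fv‖ * ‖a₁ - a₂‖ :=
        abs_real_inner_le_norm _ _
      _ ≤ ‖fu - fv‖ * (2 * R) := by
        apply mul_le_mul_of_nonneg_left hda (norm_nonneg _)
  have hip2 : |(inner ℝ ((fv - b₁) + (fv - b₂)) (a₁ - b₁) : ℝ)| ≤ (2 * R) * ‖a₁ - b₁‖ := by
    calc |(inner ℝ ((fv - b₁) + (fv - b₂)) (a₁ - b₁) : ℝ)|
        ≤ ‖(fv - b₁) + (fv - b₂)‖ * ‖a₁ - b₁‖ := abs_real_inner_le_norm _ _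
      _ ≤ (2 * R) * ‖a₁ - b₁‖ := by
        apply mul_le_mul_of_nonneg_right hw (norm_nonneg _)
  have h2 : |tu - tv| ≤ (2 * R / σ ^ 2) * (‖fu - fv‖ + ‖a₁ - b₁‖) := by
    have : tu - tv = ((‖fu - a₂‖ ^ 2 - ‖fu - a₁‖ ^ 2)
        - (‖fv - b₂‖ ^ 2 - ‖fv - b₁‖ ^ 2)) / (2 * σ ^ 2) := by
      rw [htu, htv]; ring
    rw [this, hid, abs_div, abs_of_pos (by positivity : (0:ℝ) < 2 * σ ^ 2),
      div_le_iff₀ (by positivity)]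
    have habs : |2 * (inner ℝ (fu - fv) (a₁ - a₂) : ℝ)
        + 2 * (inner ℝ ((fv - b₁) + (fv - b₂)) (a₁ - b₁) : ℝ)|
        ≤ 2 * (‖fu - fv‖ * (2 * R)) + 2 * ((2 * R) * ‖a₁ - b₁‖) := by
      calc _ ≤ |2 * (inner ℝ (fu - fv) (a₁ - a₂) : ℝ)|
            + |2 * (inner ℝ ((fv - b₁) + (fv - b₂)) (a₁ - b₁) : ℝ)| := abs_add_le _ _
        _ ≤ _ := by
          rw [abs_mul, abs_mul]
          simp only [abs_two]
          gcongr
    calc |2 * (inner ℝ (fu - fv) (a₁ - a₂) : ℝ)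
        + 2 * (inner ℝ ((fv - b₁) + (fv - b₂)) (a₁ - b₁) : ℝ)|
        ≤ 2 * (‖fu - fv‖ * (2 * R)) + 2 * ((2 * R) * ‖a₁ - b₁‖) := habs
      _ = (2 * R / σ ^ 2) * (‖fu - fv‖ + ‖a₁ - b₁‖) * (2 * σ ^ 2) := by
          field_simp
  linarith
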